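/- If b = 2, then the singular points of the hypersurface t(x) = 2, where t = -2 + x₁² + x₂² - x₁x₂x₃ + x₃², are exactly the four points (2,2,2), (2,-2,-2), (-2,2,-2), (-2,-2,2). -/
import Mathlib


open MvPolynomial

/-- The boundary trace polynomial of the one-holed torus. -/
noncomputable def t : MvPolynomial (Fin 3) ℂ :=
  -2 + X 0 ^ 2 + X 1 ^ 2 - X 0 * X 1 * X 2 + X 2 ^ 2

/-- For `b = 2`, the singular points of `{t = 2}` are exactly the four listed points. -/
theorem stmt_4 :
    {p : Fin 3 → ℂ | eval p t = 2 ∧ ∀ i : Fin 3, eval p (pderiv i t) = 0} =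
      {![2, 2, 2], ![2, -2, -2], ![-2, 2, -2], ![-2, -2, 2]} := by
  have e2 : (2 : MvPolynomial (Fin 3) ℂ) = C 2 := (map_ofNat C 2).symm
  ext p
  simp only [Set.mem_setOf_eq, Set.mem_insert_iff, Set.mem_singleton_iff]
  constructor
  · rintro ⟨h, hd⟩
    have h0 := hd 0
    have h1 := hd 1
    have h2 := hd 2
    rw [t, e2] at h0 h1 h2
    simp [pderiv_X, pderiv_mul, pderiv_pow, pderiv_C, Pi.single_apply, Fin.ext_iff] at h0 h1 h2
    simp [t] at h
    have hab : (p 0) ^ 2 = (p 1) ^ 2 := by linear_combination (p 0 / 2) * h0 - (p 1 / 2) * h1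
    have hac : (p 0) ^ 2 = (p 2) ^ 2 := by linear_combination (p 0 / 2) * h0 - (p 2 / 2) * h2
    have ha4 : (p 0) ^ 2 = 4 := by linear_combination h + hab + hac - p 0 * h0
    have hb4 : (p 1) ^ 2 = 4 := by linear_combination ha4 - hab
    have hc4 : (p 2) ^ 2 = 4 := by linear_combination ha4 - hac
    have ha : p 0 = 2 ∨ p 0 = -2 := by
      rcases mul_eq_zero.mp (show (p 0 - 2) * (p 0 + 2) = 0 by linear_combination ha4) with h' | h'
      exacts [Or.inl (by linear_combination h'), Or.inr (by linear_combination h')]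
    have hb : p 1 = 2 ∨ p 1 = -2 := by
      rcases mul_eq_zero.mp (show (p 1 - 2) * (p 1 + 2) = 0 by linear_combination hb4) with h' | h'
      exacts [Or.inl (by linear_combination h'), Or.inr (by linear_combination h')]
    have hc : p 2 = 2 ∨ p 2 = -2 := by
      rcases mul_eq_zero.mp (show (p 2 - 2) * (p 2 + 2) = 0 by linear_combination hc4) with h' | h'
      exacts [Or.inl (by linear_combination h'), Or.inr (by linear_combination h')]
    rcases ha with ha | ha <;> rcases hb with hb | hb <;> rcases hc with hc | hc <;>
      rw [ha, hb, hc] at h0 <;> norm_num at h0 <;>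
      [ (exact Or.inl (by funext i; fin_cases i <;> simp [ha, hb, hc]));
        (exact Or.inr (Or.inl (by funext i; fin_cases i <;> simp [ha, hb, hc])));
        (exact Or.inr (Or.inr (Or.inl (by funext i; fin_cases i <;> simp [ha, hb, hc]))));
        (exact Or.inr (Or.inr (Or.inr (by funext i; fin_cases i <;> simp [ha, hb, hc]))))]
  · rintro (rfl | rfl | rfl | rfl) <;>
      refine ⟨by simp [t]; norm_num, fun i => ?_⟩ <;>
      fin_cases i <;>
      · rw [t, e2]
        simp [pderiv_X, pderiv_mul, pderiv_pow, pderiv_C, Pi.single_apply, Fin.ext_iff]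
        try ring
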